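/- For the partially depolarizing channel with noise parameter q ∈ [0,1], the SWITCH output with control |+⟩ applied to input ρ equals (1−q)²[½(|0⟩⟨0|+|1⟩⟨1|) ⊗ I/d + ½(|0⟩⟨1|+|1⟩⟨0|) ⊗ ρ/d²] + 2q(1−q)(|+⟩⟨+| ⊗ I/d) + q²(|+⟩⟨+| ⊗ ρ). -/

import Mathlib

open Matrix Kronecker BigOperators
open scoped ComplexOrder

/-- Kraus operators of the partially depolarizing channel
`N_q(ρ) = q ρ + (1-q) Tr(ρ) I/d`, built from a unitary orthonormal basis `U`. -/
noncomputable def depolKraus (d : ℕ) (q : ℝ)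
    (U : Fin (d ^ 2) → Matrix (Fin d) (Fin d) ℂ) :
    Option (Fin (d ^ 2)) → Matrix (Fin d) (Fin d) ℂ :=
  fun o => o.elim (((Real.sqrt q : ℝ) : ℂ) • (1 : Matrix (Fin d) (Fin d) ℂ))
    (fun i => ((Real.sqrt (1 - q) / (d : ℝ) : ℝ) : ℂ) • U i)

/-- The projector `|+⟩⟨+|` on the control qubit. -/
noncomputable def plusProj : Matrix (Fin 2) (Fin 2) ℂ :=
  (1 / 2 : ℂ) • (Matrix.single (0 : Fin 2) 0 (1 : ℂ)
    + Matrix.single (0 : Fin 2) 1 (1 : ℂ)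
    + Matrix.single (1 : Fin 2) 0 (1 : ℂ)
    + Matrix.single (1 : Fin 2) 1 (1 : ℂ))

section Aux
variable {d : ℕ}

private lemma expand_lemma (hd : 0 < d)
    (U : Fin (d ^ 2) → Matrix (Fin d) (Fin d) ℂ)
    (hortho : ∀ i j, ((U i)ᴴ * (U j)).trace = if i = j then (d : ℂ) else 0)
    (X : Matrix (Fin d) (Fin d) ℂ) :
    ∑ i, ((U i)ᴴ * X).trace • U i = (d : ℂ) • X := by
  have hdC : (d : ℂ) ≠ 0 := Nat.cast_ne_zero.mpr hd.ne'
  set f := (Fintype.linearCombination ℂ U : (Fin (d ^ 2) → ℂ) →ₗ[ℂ] _) with hf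
  have hfc : ∀ c, f c = ∑ i, c i • U i := fun c => Fintype.linearCombination_apply ℂ U c
  have hpair : ∀ (c : Fin (d ^ 2) → ℂ) (j), ((U j)ᴴ * f c).trace = (d : ℂ) * c j := by
    intro c j
    rw [hfc, Finset.mul_sum]
    simp only [Matrix.mul_smul, Matrix.trace_sum, Matrix.trace_smul, hortho]
    simp [Finset.sum_ite_eq, mul_comm]
  have hinj : Function.Injective f := by
    rw [← LinearMap.ker_eq_bot, LinearMap.ker_eq_bot']
    intro c hc
    funext j
    have h := hpair c j
    rw [hc] at h
    simpa [hdC, eq_comm] using h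
  have hsurj : Function.Surjective f := by
    have h1 : Module.finrank ℂ (Fin (d ^ 2) → ℂ)
        = Module.finrank ℂ (Matrix (Fin d) (Fin d) ℂ) := by
      simp [Module.finrank_matrix, Module.finrank_pi, pow_two]
    exact (LinearMap.injective_iff_surjective_of_finrank_eq_finrank h1).mp hinj
  obtain ⟨c, rfl⟩ := hsurj X
  calc ∑ i, ((U i)ᴴ * f c).trace • U i = ∑ i, ((d : ℂ) * c i) • U i := by
        simp_rw [hpair]
    _ = (d : ℂ) • f c := by
        rw [hfc, Finset.smul_sum]; simp_rw [mul_smul]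

end Aux

section Aux2
variable {d : ℕ} (U : Fin (d ^ 2) → Matrix (Fin d) (Fin d) ℂ)

private lemma trace_conjT_mul_std (i : Fin (d ^ 2)) (a b : Fin d) :
    ((U i)ᴴ * Matrix.single a b (1 : ℂ)).trace = star (U i a b) := by
  rw [Matrix.trace_mul_comm]
  have h : ∀ k : Fin d, (Matrix.single a b (1 : ℂ) * (U i)ᴴ) k k
      = if k = a then (U i)ᴴ b k else 0 := by
    intro k
    by_cases hk : k = a
    · subst hk; simp
    · simp [hk]
  rw [Matrix.trace]
  simp only [Matrix.diag_apply, h]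
  simp [Matrix.conjTranspose_apply]

private lemma complete_rel (hd : 0 < d)
    (hortho : ∀ i j, ((U i)ᴴ * (U j)).trace = if i = j then (d : ℂ) else 0)
    (a b p r : Fin d) :
    ∑ i, star (U i a b) * U i p r
      = (d : ℂ) * (if p = a ∧ r = b then 1 else 0) := by
  have h := expand_lemma hd U hortho (Matrix.single a b 1)
  have h2 := congrArg (fun M => M p r) h
  simp only [Matrix.sum_apply, Matrix.smul_apply, smul_eq_mul,
    trace_conjT_mul_std] at h2
  rw [h2]
  by_cases h3 : p = a ∧ r = b
  · obtain ⟨rfl, rfl⟩ := h3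
    simp [Matrix.single]
  · rw [if_neg h3, mul_zero]
    simp only [Matrix.single, Matrix.of_apply]
    rw [if_neg, mul_zero]
    exact fun h5 => h3 ⟨h5.1.symm, h5.2.symm⟩

private lemma sum_U_conj (hd : 0 < d)
    (hortho : ∀ i j, ((U i)ᴴ * (U j)).trace = if i = j then (d : ℂ) else 0)
    (X : Matrix (Fin d) (Fin d) ℂ) :
    ∑ i, U i * X * (U i)ᴴ = ((d : ℂ) * X.trace) • 1 := by
  ext p r
  have h1 : ∀ i, (U i * X * (U i)ᴴ) p r
      = ∑ b, ∑ a, X a b * (star (U i r b) * U i p a) := by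
    intro i
    rw [Matrix.mul_apply]
    refine Finset.sum_congr rfl fun b _ => ?_
    rw [Matrix.conjTranspose_apply, Matrix.mul_apply, Finset.sum_mul]
    refine Finset.sum_congr rfl fun a _ => ?_
    ring
  simp only [Matrix.sum_apply, h1]
  rw [Finset.sum_comm]
  have h2 : ∀ b, ∑ i, ∑ a, X a b * (star (U i r b) * U i p a)
      = ∑ a, X a b * ((d : ℂ) * if p = r ∧ a = b then 1 else 0) := by
    intro b
    rw [Finset.sum_comm]
    refine Finset.sum_congr rfl fun a _ => ?_
    rw [← Finset.mul_sum, complete_rel U hd hortho r b p a]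
  simp only [h2]
  by_cases hpr : p = r
  · subst hpr
    simp only [true_and, Matrix.smul_apply, Matrix.one_apply_eq, smul_eq_mul, mul_one]
    rw [Matrix.trace, Finset.mul_sum, Finset.sum_comm]
    refine Finset.sum_congr rfl fun a _ => ?_
    rw [Finset.sum_eq_single a (by intro b _ hb; simp [Ne.symm hb]) (by simp)]
    simp [Matrix.diag_apply, mul_comm]
  · simp [hpr, Matrix.one_apply_ne hpr]

private lemma sum_trace_smul (hd : 0 < d)
    (hortho : ∀ i j, ((U i)ᴴ * (U j)).trace = if i = j then (d : ℂ) else 0)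
    (X : Matrix (Fin d) (Fin d) ℂ) :
    ∑ i, (U i * X).trace • (U i)ᴴ = (d : ℂ) • X := by
  ext p r
  simp only [Matrix.sum_apply, Matrix.smul_apply, Matrix.conjTranspose_apply,
    smul_eq_mul]
  have h1 : ∀ i, (U i * X).trace * star (U i r p)
      = ∑ k, ∑ l, X l k * (star (U i r p) * U i k l) := by
    intro i
    rw [Matrix.trace, Finset.sum_mul]
    refine Finset.sum_congr rfl fun k _ => ?_
    rw [Matrix.diag_apply, Matrix.mul_apply, Finset.sum_mul]
    refine Finset.sum_congr rfl fun l _ => ?_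
    ring
  simp only [h1]
  rw [Finset.sum_comm]
  have h2 : ∀ k, ∑ i, ∑ l, X l k * (star (U i r p) * U i k l)
      = ∑ l, X l k * ((d : ℂ) * if k = r ∧ l = p then 1 else 0) := by
    intro k
    rw [Finset.sum_comm]
    refine Finset.sum_congr rfl fun l _ => ?_
    rw [← Finset.mul_sum, complete_rel U hd hortho r p k l]
  simp only [h2]
  rw [Finset.sum_eq_single r ?_ ?_]
  · rw [Finset.sum_eq_single p ?_ ?_]
    · simp [mul_comm]
    · intro l _ hl; simp [hl]
    · intro h; exact absurd (Finset.mem_univ _) h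
  · intro k _ hk; simp [hk]
  · intro h; exact absurd (Finset.mem_univ _) h
end Aux2

private lemma star_ofReal (r : ℝ) : star ((r : ℝ) : ℂ) = ((r : ℝ) : ℂ) :=
  Complex.conj_ofReal r

section Aux3
variable {d : ℕ} {q : ℝ} {U : Fin (d ^ 2) → Matrix (Fin d) (Fin d) ℂ}

private lemma chan (hd : 0 < d) (hq0 : 0 ≤ q) (hq1 : q ≤ 1)
    (hortho : ∀ i j, ((U i)ᴴ * (U j)).trace = if i = j then (d : ℂ) else 0)
    (X : Matrix (Fin d) (Fin d) ℂ) :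
    ∑ j : Option (Fin (d ^ 2)), depolKraus d q U j * X * (depolKraus d q U j)ᴴ
      = (q : ℂ) • X + ((1 - (q : ℂ)) * (d : ℂ)⁻¹ * X.trace) • 1 := by
  have hdC : (d : ℂ) ≠ 0 := Nat.cast_ne_zero.mpr hd.ne'
  rw [univ_option, Finset.sum_insertNone]
  have hnone : (depolKraus d q U none * X * (depolKraus d q U none)ᴴ) = (q : ℂ) • X := by
    show (((Real.sqrt q : ℝ) : ℂ) • (1 : Matrix (Fin d) (Fin d) ℂ)) * X * _ = _
    rw [show (depolKraus d q U none)ᴴ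
        = (((Real.sqrt q : ℝ) : ℂ) • (1 : Matrix (Fin d) (Fin d) ℂ))ᴴ from rfl]
    rw [Matrix.conjTranspose_smul, Matrix.conjTranspose_one, star_ofReal,
      Matrix.smul_mul, Matrix.mul_smul, Matrix.one_mul, Matrix.mul_one, smul_smul,
      ← Complex.ofReal_mul, Real.mul_self_sqrt hq0]
  rw [hnone]
  congr 1
  have hsome : ∀ i : Fin (d ^ 2),
      depolKraus d q U (some i) * X * (depolKraus d q U (some i))ᴴ
        = (((Real.sqrt (1 - q) / d : ℝ) : ℂ) * ((Real.sqrt (1 - q) / d : ℝ) : ℂ))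
            • (U i * X * (U i)ᴴ) := by
    intro i
    show (((Real.sqrt (1 - q) / d : ℝ) : ℂ) • U i) * X * _ = _
    rw [show (depolKraus d q U (some i))ᴴ
        = (((Real.sqrt (1 - q) / d : ℝ) : ℂ) • U i)ᴴ from rfl]
    rw [Matrix.conjTranspose_smul, star_ofReal, Matrix.smul_mul, Matrix.smul_mul,
      Matrix.mul_smul, smul_smul]
  simp_rw [hsome]
  rw [← Finset.smul_sum, sum_U_conj U hd hortho X, smul_smul]
  congr 1
  have h1 : Real.sqrt (1 - q) * Real.sqrt (1 - q) = 1 - q :=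
    Real.mul_self_sqrt (by linarith)
  push_cast
  rw [div_mul_div_comm, ← Complex.ofReal_mul, h1]
  push_cast
  field_simp

private lemma coeffsum (hd : 0 < d) (hq0 : 0 ≤ q) (hq1 : q ≤ 1)
    (hortho : ∀ i j, ((U i)ᴴ * (U j)).trace = if i = j then (d : ℂ) else 0)
    (X : Matrix (Fin d) (Fin d) ℂ) :
    ∑ j : Option (Fin (d ^ 2)), (depolKraus d q U j * X).trace • (depolKraus d q U j)ᴴ
      = ((q : ℂ) * X.trace) • 1 + ((1 - (q : ℂ)) * (d : ℂ)⁻¹) • X := by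
  have hdC : (d : ℂ) ≠ 0 := Nat.cast_ne_zero.mpr hd.ne'
  rw [univ_option, Finset.sum_insertNone]
  have hnone : (depolKraus d q U none * X).trace • (depolKraus d q U none)ᴴ
      = ((q : ℂ) * X.trace) • 1 := by
    show ((((Real.sqrt q : ℝ) : ℂ) • (1 : Matrix (Fin d) (Fin d) ℂ)) * X).trace • _ = _
    rw [show (depolKraus d q U none)ᴴ
        = (((Real.sqrt q : ℝ) : ℂ) • (1 : Matrix (Fin d) (Fin d) ℂ))ᴴ from rfl]
    rw [Matrix.conjTranspose_smul, Matrix.conjTranspose_one, star_ofReal,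
      Matrix.smul_mul, Matrix.one_mul, Matrix.trace_smul, smul_smul]
    congr 1
    rw [smul_eq_mul, mul_comm ((Real.sqrt q : ℂ)) X.trace, mul_assoc,
      ← Complex.ofReal_mul, Real.mul_self_sqrt hq0, mul_comm]
  rw [hnone]
  congr 1
  have hsome : ∀ i : Fin (d ^ 2),
      (depolKraus d q U (some i) * X).trace • (depolKraus d q U (some i))ᴴ
        = (((Real.sqrt (1 - q) / d : ℝ) : ℂ) * ((Real.sqrt (1 - q) / d : ℝ) : ℂ))
            • ((U i * X).trace • (U i)ᴴ) := by
    intro i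
    show ((((Real.sqrt (1 - q) / d : ℝ) : ℂ) • U i) * X).trace • _ = _
    rw [show (depolKraus d q U (some i))ᴴ
        = (((Real.sqrt (1 - q) / d : ℝ) : ℂ) • U i)ᴴ from rfl]
    rw [Matrix.conjTranspose_smul, star_ofReal, Matrix.smul_mul, Matrix.trace_smul,
      smul_smul, smul_smul]
    congr 1
    simp only [smul_eq_mul]
    ring
  simp_rw [hsome]
  rw [← Finset.smul_sum, sum_trace_smul U hd hortho X, smul_smul]
  congr 1
  have h1 : Real.sqrt (1 - q) * Real.sqrt (1 - q) = 1 - q :=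
    Real.mul_self_sqrt (by linarith)
  push_cast
  rw [div_mul_div_comm, ← Complex.ofReal_mul, h1]
  push_cast
  field_simp
end Aux3

section Aux4
variable {d : ℕ} {q : ℝ} {U : Fin (d ^ 2) → Matrix (Fin d) (Fin d) ℂ}

private lemma S1_eq (hd : 0 < d) (hq0 : 0 ≤ q) (hq1 : q ≤ 1)
    (hortho : ∀ i j, ((U i)ᴴ * (U j)).trace = if i = j then (d : ℂ) else 0)
    (ρ : Matrix (Fin d) (Fin d) ℂ) (htr : ρ.trace = 1) :
    ∑ i : Option (Fin (d ^ 2)), ∑ j : Option (Fin (d ^ 2)),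
        depolKraus d q U i * depolKraus d q U j * ρ
          * (depolKraus d q U j)ᴴ * (depolKraus d q U i)ᴴ
      = ((q : ℂ) ^ 2) • ρ + ((1 - (q : ℂ) ^ 2) * (d : ℂ)⁻¹) • 1 := by
  have hdC : (d : ℂ) ≠ 0 := Nat.cast_ne_zero.mpr hd.ne'
  set K := depolKraus d q U with hK
  have hrow : ∀ i : Option (Fin (d ^ 2)),
      ∑ j : Option (Fin (d ^ 2)), K i * K j * ρ * (K j)ᴴ * (K i)ᴴ
        = K i * ((q : ℂ) • ρ + ((1 - (q : ℂ)) * (d : ℂ)⁻¹ * ρ.trace) • 1) * (K i)ᴴ := by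
    intro i
    have e1 : ∀ j : Option (Fin (d ^ 2)), K i * K j * ρ * (K j)ᴴ * (K i)ᴴ
        = K i * (K j * ρ * (K j)ᴴ) * (K i)ᴴ := by
      intro j; simp only [Matrix.mul_assoc]
    simp_rw [e1]
    rw [← Finset.sum_mul, ← Finset.mul_sum, chan hd hq0 hq1 hortho ρ]
  simp_rw [hrow]
  rw [chan hd hq0 hq1 hortho]
  rw [htr]
  have htrN : ((q : ℂ) • ρ + ((1 - (q : ℂ)) * (d : ℂ)⁻¹ * 1) • 1).trace = 1 := by
    rw [Matrix.trace_add, Matrix.trace_smul, Matrix.trace_smul, htr, Matrix.trace_one]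
    simp only [Fintype.card_fin, smul_eq_mul]
    field_simp
    ring
  rw [mul_one] at htrN ⊢
  rw [htrN]
  match_scalars <;> (field_simp; try ring)

private lemma S2_eq (hd : 0 < d) (hq0 : 0 ≤ q) (hq1 : q ≤ 1)
    (hortho : ∀ i j, ((U i)ᴴ * (U j)).trace = if i = j then (d : ℂ) else 0)
    (ρ : Matrix (Fin d) (Fin d) ℂ) (htr : ρ.trace = 1) :
    ∑ i : Option (Fin (d ^ 2)), ∑ j : Option (Fin (d ^ 2)),
        depolKraus d q U i * depolKraus d q U j * ρ
          * (depolKraus d q U i)ᴴ * (depolKraus d q U j)ᴴ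
      = ((q : ℂ) ^ 2) • ρ + (2 * (q : ℂ) * (1 - (q : ℂ)) * (d : ℂ)⁻¹) • 1
        + ((1 - (q : ℂ)) ^ 2 * ((d : ℂ) ^ 2)⁻¹) • ρ := by
  have hdC : (d : ℂ) ≠ 0 := Nat.cast_ne_zero.mpr hd.ne'
  set K := depolKraus d q U with hK
  rw [Finset.sum_comm]
  have hrow : ∀ j : Option (Fin (d ^ 2)),
      ∑ i : Option (Fin (d ^ 2)), K i * K j * ρ * (K i)ᴴ * (K j)ᴴ
        = (q : ℂ) • (K j * ρ * (K j)ᴴ)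
          + ((1 - (q : ℂ)) * (d : ℂ)⁻¹) • ((K j * ρ).trace • (K j)ᴴ) := by
    intro j
    have e1 : ∀ i : Option (Fin (d ^ 2)), K i * K j * ρ * (K i)ᴴ * (K j)ᴴ
        = K i * (K j * ρ) * (K i)ᴴ * (K j)ᴴ := by
      intro i; simp only [Matrix.mul_assoc]
    simp_rw [e1]
    rw [← Finset.sum_mul, chan hd hq0 hq1 hortho (K j * ρ), Matrix.add_mul,
      Matrix.smul_mul, Matrix.smul_mul, Matrix.one_mul, Matrix.mul_assoc]
    congr 1
    rw [mul_smul]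
  simp_rw [hrow]
  rw [Finset.sum_add_distrib, ← Finset.smul_sum, ← Finset.smul_sum,
    chan hd hq0 hq1 hortho ρ, coeffsum hd hq0 hq1 hortho ρ, htr]
  match_scalars <;> (field_simp; try ring)
end Aux4

section Aux5

private lemma kron_conjT {l m n p : Type*} [Fintype m] [Fintype p]
    (A : Matrix l m ℂ) (B : Matrix n p ℂ) : (A ⊗ₖ B)ᴴ = Aᴴ ⊗ₖ Bᴴ := by
  ext ⟨i, j⟩ ⟨k, l⟩
  simp [Matrix.conjTranspose_apply, Matrix.kroneckerMap_apply, mul_comm]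

private lemma sum_kron {ι m p : Type*} [Fintype m] (s : Finset ι)
    (A : ι → Matrix m m ℂ) (B : Matrix p p ℂ) :
    (∑ i ∈ s, A i) ⊗ₖ B = ∑ i ∈ s, A i ⊗ₖ B := by
  ext ⟨i, j⟩ ⟨k, l⟩
  simp [Matrix.kroneckerMap_apply, Matrix.sum_apply, Finset.sum_mul]

private lemma std_conjT (a b : Fin 2) :
    (Matrix.single a b (1 : ℂ))ᴴ = Matrix.single b a (1 : ℂ) := by
  ext x y
  simp only [Matrix.conjTranspose_apply, Matrix.single, Matrix.of_apply,
    apply_ite (star : ℂ → ℂ), star_one, star_zero]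
  by_cases h1 : a = y <;> by_cases h2 : b = x <;> simp [h1, h2]

private lemma plusProj_apply (b c : Fin 2) : plusProj b c = (2⁻¹ : ℂ) := by
  fin_cases b <;> fin_cases c <;>
    simp [plusProj, Matrix.single]

private lemma std_sandwich (M : Matrix (Fin 2) (Fin 2) ℂ) (a b c e : Fin 2) :
    Matrix.single a b (1 : ℂ) * M * Matrix.single c e (1 : ℂ)
      = M b c • Matrix.single a e (1 : ℂ) := by
  ext x y
  by_cases hy : y = e
  · subst hy
    rw [Matrix.mul_single_apply_same]
    by_cases hx : x = a
    · subst hx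
      rw [Matrix.single_mul_apply_same]
      simp [Matrix.single, mul_comm]
    · rw [Matrix.single_mul_apply_of_ne (1 : ℂ) a b x c hx]
      simp only [Matrix.smul_apply, Matrix.single, Matrix.of_apply, smul_eq_mul,
        mul_ite, mul_one, mul_zero]
      rw [if_neg (fun h => hx h.1.symm)]
  · rw [Matrix.mul_single_apply_of_ne (1 : ℂ) c e x y hy]
    simp only [Matrix.smul_apply, Matrix.single, Matrix.of_apply, smul_eq_mul,
      mul_ite, mul_one, mul_zero]
    rw [if_neg (fun h => hy h.2.symm)]

private lemma ctrl (a b c e : Fin 2) :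
    Matrix.single a b (1 : ℂ) * plusProj * Matrix.single c e (1 : ℂ)
      = (2⁻¹ : ℂ) • Matrix.single a e (1 : ℂ) := by
  rw [std_sandwich, plusProj_apply]

end Aux5

theorem switch_of_partially_depolarizing (d : ℕ) (hd : 1 ≤ d)
    (q : ℝ) (hq0 : 0 ≤ q) (hq1 : q ≤ 1)
    (U : Fin (d ^ 2) → Matrix (Fin d) (Fin d) ℂ)
    (hU : ∀ i, (U i)ᴴ * U i = 1)
    (hortho : ∀ i j, ((U i)ᴴ * (U j)).trace = if i = j then (d : ℂ) else 0)
    (ρ : Matrix (Fin d) (Fin d) ℂ) (hρ : ρ.PosSemidef) (htr : ρ.trace = 1) :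
    ∑ i : Option (Fin (d ^ 2)), ∑ j : Option (Fin (d ^ 2)),
      ((depolKraus d q U i * depolKraus d q U j)
          ⊗ₖ Matrix.single (0 : Fin 2) 0 (1 : ℂ)
        + (depolKraus d q U j * depolKraus d q U i)
          ⊗ₖ Matrix.single (1 : Fin 2) 1 (1 : ℂ))
      * (ρ ⊗ₖ plusProj)
      * ((depolKraus d q U i * depolKraus d q U j)
          ⊗ₖ Matrix.single (0 : Fin 2) 0 (1 : ℂ)
        + (depolKraus d q U j * depolKraus d q U i)
          ⊗ₖ Matrix.single (1 : Fin 2) 1 (1 : ℂ))ᴴ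
    = (((1 - q) ^ 2 : ℝ) : ℂ) •
        ((2 * (d : ℂ))⁻¹ • ((1 : Matrix (Fin d) (Fin d) ℂ) ⊗ₖ
            (Matrix.single (0 : Fin 2) 0 (1 : ℂ)
              + Matrix.single (1 : Fin 2) 1 (1 : ℂ)))
          + (2 * (d : ℂ) ^ 2)⁻¹ • (ρ ⊗ₖ
            (Matrix.single (0 : Fin 2) 1 (1 : ℂ)
              + Matrix.single (1 : Fin 2) 0 (1 : ℂ))))
      + ((2 * q * (1 - q) : ℝ) : ℂ) •
          (((d : ℂ)⁻¹ • (1 : Matrix (Fin d) (Fin d) ℂ)) ⊗ₖ plusProj)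
      + ((q ^ 2 : ℝ) : ℂ) • (ρ ⊗ₖ plusProj) := by

  have hd0 : 0 < d := hd
  have hdC : (d : ℂ) ≠ 0 := Nat.cast_ne_zero.mpr hd0.ne'
  have hterm : ∀ i j : Option (Fin (d ^ 2)),
      ((depolKraus d q U i * depolKraus d q U j)
          ⊗ₖ Matrix.single (0 : Fin 2) 0 (1 : ℂ)
        + (depolKraus d q U j * depolKraus d q U i)
          ⊗ₖ Matrix.single (1 : Fin 2) 1 (1 : ℂ))
      * (ρ ⊗ₖ plusProj)
      * ((depolKraus d q U i * depolKraus d q U j)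
          ⊗ₖ Matrix.single (0 : Fin 2) 0 (1 : ℂ)
        + (depolKraus d q U j * depolKraus d q U i)
          ⊗ₖ Matrix.single (1 : Fin 2) 1 (1 : ℂ))ᴴ
    = (2⁻¹ : ℂ) • ((depolKraus d q U i * depolKraus d q U j * ρ
          * (depolKraus d q U j)ᴴ * (depolKraus d q U i)ᴴ)
        ⊗ₖ Matrix.single (0 : Fin 2) 0 (1 : ℂ))
      + (2⁻¹ : ℂ) • ((depolKraus d q U i * depolKraus d q U j * ρ
          * (depolKraus d q U i)ᴴ * (depolKraus d q U j)ᴴ)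
        ⊗ₖ Matrix.single (0 : Fin 2) 1 (1 : ℂ))
      + (2⁻¹ : ℂ) • ((depolKraus d q U j * depolKraus d q U i * ρ
          * (depolKraus d q U j)ᴴ * (depolKraus d q U i)ᴴ)
        ⊗ₖ Matrix.single (1 : Fin 2) 0 (1 : ℂ))
      + (2⁻¹ : ℂ) • ((depolKraus d q U j * depolKraus d q U i * ρ
          * (depolKraus d q U i)ᴴ * (depolKraus d q U j)ᴴ)
        ⊗ₖ Matrix.single (1 : Fin 2) 1 (1 : ℂ)) := by
    intro i j
    rw [Matrix.conjTranspose_add, kron_conjT, kron_conjT, std_conjT, std_conjT]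
    simp only [Matrix.add_mul, Matrix.mul_add, ← Matrix.mul_kronecker_mul]
    simp only [ctrl]
    simp only [Matrix.kronecker_smul, Matrix.conjTranspose_mul, Matrix.mul_assoc]
    abel
  simp_rw [hterm]
  simp only [Finset.sum_add_distrib]
  simp only [← Finset.smul_sum]
  simp only [← sum_kron]
  have h3 : ∑ i : Option (Fin (d ^ 2)), ∑ j : Option (Fin (d ^ 2)),
      depolKraus d q U j * depolKraus d q U i * ρ
        * (depolKraus d q U j)ᴴ * (depolKraus d q U i)ᴴ
    = ∑ i : Option (Fin (d ^ 2)), ∑ j : Option (Fin (d ^ 2)),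
      depolKraus d q U i * depolKraus d q U j * ρ
        * (depolKraus d q U i)ᴴ * (depolKraus d q U j)ᴴ := Finset.sum_comm
  have h4 : ∑ i : Option (Fin (d ^ 2)), ∑ j : Option (Fin (d ^ 2)),
      depolKraus d q U j * depolKraus d q U i * ρ
        * (depolKraus d q U i)ᴴ * (depolKraus d q U j)ᴴ
    = ∑ i : Option (Fin (d ^ 2)), ∑ j : Option (Fin (d ^ 2)),
      depolKraus d q U i * depolKraus d q U j * ρ
        * (depolKraus d q U j)ᴴ * (depolKraus d q U i)ᴴ := Finset.sum_comm
  rw [h3, h4]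
  simp only [S1_eq hd0 hq0 hq1 hortho ρ htr, S2_eq hd0 hq0 hq1 hortho ρ htr]
  simp only [plusProj, Matrix.add_kronecker, Matrix.kronecker_add, Matrix.smul_kronecker,
    Matrix.kronecker_smul, smul_add, smul_smul]
  match_scalars <;> (push_cast; field_simp; try ring)
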